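/- (Counterexample to multiclass isotonic regression omniprediction, squared loss side.) Consider minimizing (1/2)‖p_1 − e_1‖_2² + (1/2)‖p_2 − e_2‖_2² over p_1, p_2 ∈ Δ^3 subject to [p_1]_1 ≤ [p_2]_1. The unique minimizer is p_1 = (3/7, 2/7, 2/7) and p_2 = (3/7, 4/7, 0). -/

import Mathlib

set_option maxHeartbeats 1000000 in
/-- squared-loss side of the isotonic regression counterexample:
minimizing `½‖p₁ - e₁‖² + ½‖p₂ - e₂‖²` over `p₁, p₂ ∈ Δ³` with `[p₁]₁ ≤ [p₂]₁`
has the unique minimizer `p₁ = (3/7, 2/7, 2/7)`, `p₂ = (3/7, 4/7, 0)`. -/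
theorem stmt_14 :
    let p1s : Fin 3 → ℝ := ![3/7, 2/7, 2/7]
    let p2s : Fin 3 → ℝ := ![3/7, 4/7, 0]
    let obj : (Fin 3 → ℝ) → (Fin 3 → ℝ) → ℝ := fun p1 p2 =>
      (1/2) * ∑ i, (p1 i - if i = 0 then 1 else 0) ^ 2
        + (1/2) * ∑ i, (p2 i - if i = 1 then 1 else 0) ^ 2
    (p1s ∈ stdSimplex ℝ (Fin 3) ∧ p2s ∈ stdSimplex ℝ (Fin 3) ∧ p1s 0 ≤ p2s 0) ∧
    ∀ p1 ∈ stdSimplex ℝ (Fin 3), ∀ p2 ∈ stdSimplex ℝ (Fin 3), p1 0 ≤ p2 0 →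
      obj p1s p2s ≤ obj p1 p2 ∧ (obj p1s p2s = obj p1 p2 → p1 = p1s ∧ p2 = p2s) := by
  intro p1s p2s obj
  have hobj : ∀ q1 q2 : Fin 3 → ℝ, obj q1 q2 =
      (1/2) * ((q1 0 - 1)^2 + (q1 1)^2 + (q1 2)^2)
        + (1/2) * ((q2 0)^2 + (q2 1 - 1)^2 + (q2 2)^2) := by
    intro q1 q2
    simp [obj, Fin.sum_univ_three]
  have hobjs : obj p1s p2s = 3/7 := by
    rw [hobj]; norm_num [p1s, p2s, Matrix.cons_val_two, Matrix.tail_cons]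
  constructor
  · refine ⟨⟨?_, ?_⟩, ⟨?_, ?_⟩, ?_⟩
    · intro i; fin_cases i <;> norm_num [p1s]
    · simp [p1s, Fin.sum_univ_three]; norm_num
    · intro i; fin_cases i <;> norm_num [p2s]
    · simp [p2s, Fin.sum_univ_three]; norm_num
    · norm_num [p1s, p2s]
  · intro p1 hp1 p2 hp2 hle
    obtain ⟨h1n, h1s⟩ := hp1
    obtain ⟨h2n, h2s⟩ := hp2
    have h22 := h2n 2
    rw [Fin.sum_univ_three] at h1s h2s
    rw [hobjs, hobj]
    have key : (1/2) * ((p1 0 - 1)^2 + (p1 1)^2 + (p1 2)^2)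
        + (1/2) * ((p2 0)^2 + (p2 1 - 1)^2 + (p2 2)^2) - 3/7 =
        (1/2) * ((p1 0 - 3/7)^2 + (p1 1 - 2/7)^2 + (p1 2 - 2/7)^2
          + (p2 0 - 3/7)^2 + (p2 1 - 4/7)^2 + (p2 2)^2)
          + (6/7) * (p2 0 - p1 0) + (3/7) * (p2 2) := by
      linear_combination (2/7) * h1s - (3/7) * h2s
    constructor
    · linarith [key, sq_nonneg (p1 0 - 3/7), sq_nonneg (p1 1 - 2/7), sq_nonneg (p1 2 - 2/7), sq_nonneg (p2 0 - 3/7), sq_nonneg (p2 1 - 4/7), sq_nonneg (p2 2), hle, h22]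
    · intro heq
      have hz : (p1 0 - 3/7)^2 + (p1 1 - 2/7)^2 + (p1 2 - 2/7)^2 + (p2 0 - 3/7)^2 + (p2 1 - 4/7)^2 + (p2 2)^2 ≤ 0 := by
        linarith [key, hle, h22, heq, sq_nonneg (p1 0 - 3/7), sq_nonneg (p1 1 - 2/7), sq_nonneg (p1 2 - 2/7), sq_nonneg (p2 0 - 3/7), sq_nonneg (p2 1 - 4/7), sq_nonneg (p2 2)]
      have q10 := sq_nonneg (p1 0 - 3/7)
      have q11 := sq_nonneg (p1 1 - 2/7)
      have q12 := sq_nonneg (p1 2 - 2/7)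
      have q20 := sq_nonneg (p2 0 - 3/7)
      have q21 := sq_nonneg (p2 1 - 4/7)
      have q22 := sq_nonneg (p2 2)
      have z10 : (p1 0 - 3/7)^2 = 0 := by linarith
      have z11 : (p1 1 - 2/7)^2 = 0 := by linarith
      have z12 : (p1 2 - 2/7)^2 = 0 := by linarith
      have z20 : (p2 0 - 3/7)^2 = 0 := by linarith
      have z21 : (p2 1 - 4/7)^2 = 0 := by linarith
      have z22 : (p2 2)^2 = 0 := by linarith
      have e10 : p1 0 = 3/7 := by have := sq_eq_zero_iff.mp z10; linarith [sub_eq_zero.mp this]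
      have e11 : p1 1 = 2/7 := by have := sq_eq_zero_iff.mp z11; linarith [sub_eq_zero.mp this]
      have e12 : p1 2 = 2/7 := by have := sq_eq_zero_iff.mp z12; linarith [sub_eq_zero.mp this]
      have e20 : p2 0 = 3/7 := by have := sq_eq_zero_iff.mp z20; linarith [sub_eq_zero.mp this]
      have e21 : p2 1 = 4/7 := by have := sq_eq_zero_iff.mp z21; linarith [sub_eq_zero.mp this]
      have e22 : p2 2 = 0 := by have := sq_eq_zero_iff.mp z22; linarith
      constructor <;> funext i <;> fin_cases i <;>
        simp [p1s, p2s, e10, e11, e12, e20, e21, e22]
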